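/- Let f = (1/n)∑_{i=1}^n f_i with each f_i convex differentiable with L-Lipschitz gradient, x* a minimizer of f. For any x and any vectors α_1,...,α_n, with i uniform on {1,...,n}, β > 0, and v_i := −[∇f_i(x) − ∇f_i(α_i) + (1/n)∑_j ∇f_j(α_j)], we have E_i[‖v_i‖²] ≤ 2L(1 + 1/β)·(1/n)∑_i [f_i(α_i) − f_i(x*) − ⟨∇f_i(x*), α_i − x*⟩] + 2L(1 + β)(f(x) − f(x*)). -/

import Mathlib

open Finset RealInnerProductSpace

section aux
variable {F : Type*} [NormedAddCommGroup F] [InnerProductSpace ℝ F] [CompleteSpace F]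

lemma line_hasDerivAt (f : F → ℝ) (z u : F) (t : ℝ) (g : F)
    (hg : HasGradientAt f g (z + t • u)) :
    HasDerivAt (fun s : ℝ => f (z + s • u)) ⟪g, u⟫ t := by
  have hc : HasDerivAt (fun s : ℝ => z + s • u) u t := by
    simpa using ((hasDerivAt_id t).smul_const u).const_add z
  have h := hg.hasFDerivAt.comp_hasDerivAt t hc
  simpa [InnerProductSpace.toDual_apply_apply, Function.comp_def] using h

lemma convex_grad_lower (f : F → ℝ) (hconv : ConvexOn ℝ Set.univ f)
    (z y g : F) (hg : HasGradientAt f g z) :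
    f z + ⟪g, y - z⟫ ≤ f y := by
  have hφconv : ConvexOn ℝ Set.univ (fun t : ℝ => f (z + t • (y - z))) := by
    have h := hconv.comp_affineMap (AffineMap.lineMap z y)
    have he : (fun t : ℝ => f (z + t • (y - z))) = f ∘ (AffineMap.lineMap z y) := by
      funext t
      simp [AffineMap.lineMap_apply, add_comm]
    rw [he]
    simpa using h
  have hd : HasDerivAt (fun t : ℝ => f (z + t • (y - z))) ⟪g, y - z⟫ 0 := by
    apply line_hasDerivAt
    simpa using hg
  have hs := hφconv.le_slope_of_hasDerivAt (Set.mem_univ (0:ℝ)) (Set.mem_univ (1:ℝ))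
    one_pos hd
  have : slope (fun t : ℝ => f (z + t • (y - z))) 0 1 = f y - f z := by
    simp [slope_def_field]
  rw [this] at hs
  linarith

lemma descent_lemma (f : F → ℝ) (g : F → F) (L : ℝ) (hL : 0 < L)
    (hdiff : ∀ y, HasGradientAt f (g y) y)
    (hlip : ∀ y z, ‖g y - g z‖ ≤ L * ‖y - z‖) (z y : F) :
    f y ≤ f z + ⟪g z, y - z⟫ + L / 2 * ‖y - z‖ ^ 2 := by
  set u := y - z with hu
  set c := L * ‖u‖ ^ 2 with hc
  have hφd : ∀ t : ℝ, HasDerivAt (fun s : ℝ => f (z + s • u)) ⟪g (z + t • u), u⟫ t :=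
    fun t => line_hasDerivAt f z u t _ (hdiff _)
  set ψ : ℝ → ℝ := fun t => f z + t * ⟪g z, u⟫ + c * t ^ 2 / 2 - f (z + t • u) with hψ
  have hψd : ∀ t : ℝ, HasDerivAt ψ (⟪g z, u⟫ + c * t - ⟪g (z + t • u), u⟫) t := by
    intro t
    have h1 : HasDerivAt (fun t : ℝ => f z + t * ⟪g z, u⟫ + c * t ^ 2 / 2)
        (⟪g z, u⟫ + c * t) t := by
      have ha : HasDerivAt (fun t : ℝ => t * ⟪g z, u⟫) ⟪g z, u⟫ t := by
        simpa using (hasDerivAt_id t).mul_const ⟪g z, u⟫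
      have hb : HasDerivAt (fun t : ℝ => c * t ^ 2 / 2) (c * t) t := by
        have := ((hasDerivAt_pow 2 t).const_mul c).div_const 2
        refine this.congr_deriv ?_
        norm_num
        ring
      exact (ha.const_add (f z)).add hb
    exact h1.sub (hφd t)
  have hmono : MonotoneOn ψ (Set.Icc (0:ℝ) 1) := by
    apply monotoneOn_of_deriv_nonneg (convex_Icc 0 1)
    · exact fun t _ => ((hψd t).continuousAt).continuousWithinAt
    · exact fun t _ => ((hψd t).differentiableAt).differentiableWithinAt
    · intro t ht
      rw [interior_Icc] at ht
      rw [(hψd t).deriv]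
      have h1 : ⟪g (z + t • u) - g z, u⟫ ≤ ‖g (z + t • u) - g z‖ * ‖u‖ :=
        real_inner_le_norm _ _
      have h2 : ‖g (z + t • u) - g z‖ ≤ L * (t * ‖u‖) := by
        have h3 := hlip (z + t • u) z
        simpa [norm_smul, abs_of_pos ht.1, mul_assoc] using h3
      have h4 : ⟪g (z + t • u) - g z, u⟫ = ⟪g (z + t • u), u⟫ - ⟪g z, u⟫ :=
        inner_sub_left _ _ _
      have h5 : ‖g (z + t • u) - g z‖ * ‖u‖ ≤ L * (t * ‖u‖) * ‖u‖ :=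
        mul_le_mul_of_nonneg_right h2 (norm_nonneg u)
      have h6 : L * (t * ‖u‖) * ‖u‖ = c * t := by rw [hc]; ring
      rw [hc]
      nlinarith
  have hkey := hmono (Set.left_mem_Icc.2 zero_le_one) (Set.right_mem_Icc.2 zero_le_one)
    zero_le_one
  have hψ0 : ψ 0 = 0 := by simp [hψ]
  have h7 : z + (1:ℝ) • u = y := by rw [one_smul, hu]; abel
  have hψ1 : ψ 1 = f z + ⟪g z, u⟫ + c / 2 - f y := by
    simp only [hψ]
    rw [h7]
    ring
  rw [hψ0, hψ1] at hkey
  rw [hc] at hkey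
  rw [hu] at hkey
  linarith

lemma cocoercivity (f : F → ℝ) (g : F → F) (L : ℝ) (hL : 0 < L)
    (hdiff : ∀ y, HasGradientAt f (g y) y)
    (hconv : ConvexOn ℝ Set.univ f)
    (hlip : ∀ y z, ‖g y - g z‖ ≤ L * ‖y - z‖) (y z : F) :
    ‖g y - g z‖ ^ 2 ≤ 2 * L * (f y - f z - ⟪g z, y - z⟫) := by
  set w := g y - g z with hw
  set y' := y - L⁻¹ • w with hy'
  have h1 : f y' ≤ f y + ⟪g y, y' - y⟫ + L / 2 * ‖y' - y‖ ^ 2 :=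
    descent_lemma f g L hL hdiff hlip y y'
  have h2 : f z + ⟪g z, y' - z⟫ ≤ f y' := convex_grad_lower f hconv z y' (g z) (hdiff z)
  have hy'y : y' - y = -(L⁻¹ • w) := by rw [hy']; abel
  have e1 : ⟪g y, y' - y⟫ = -(L⁻¹ * ⟪g y, w⟫) := by
    rw [hy'y, inner_neg_right, real_inner_smul_right]
  have e2 : ‖y' - y‖ ^ 2 = L⁻¹ ^ 2 * ‖w‖ ^ 2 := by
    rw [hy'y, norm_neg, norm_smul, Real.norm_eq_abs, abs_of_pos (inv_pos.2 hL), mul_pow]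
  have e3 : ⟪g z, y' - z⟫ = ⟪g z, y - z⟫ - L⁻¹ * ⟪g z, w⟫ := by
    have h : y' - z = (y - z) - L⁻¹ • w := by rw [hy']; abel
    rw [h, inner_sub_right, real_inner_smul_right]
  have e4 : ⟪g y, w⟫ - ⟪g z, w⟫ = ‖w‖ ^ 2 := by
    rw [← inner_sub_left, ← hw]
    exact real_inner_self_eq_norm_sq w
  have hL2 : L / 2 * (L⁻¹ ^ 2 * ‖w‖ ^ 2) = L⁻¹ / 2 * ‖w‖ ^ 2 := by
    field_simp
  rw [e1, e2, hL2] at h1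
  rw [e3] at h2
  have e4' : L⁻¹ * ⟪g y, w⟫ - L⁻¹ * ⟪g z, w⟫ = L⁻¹ * ‖w‖ ^ 2 := by
    rw [← mul_sub, e4]
  have key : L⁻¹ * ‖w‖ ^ 2 ≤ 2 * (f y - f z - ⟪g z, y - z⟫) := by
    linarith [h1, h2, e4']
  calc ‖w‖ ^ 2 = L * (L⁻¹ * ‖w‖ ^ 2) := by field_simp
    _ ≤ L * (2 * (f y - f z - ⟪g z, y - z⟫)) := by
        exact mul_le_mul_of_nonneg_left key hL.le
    _ = 2 * L * (f y - f z - ⟪g z, y - z⟫) := by ring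

lemma young_split (β : ℝ) (hβ : 0 < β) (a b : F) :
    ‖a + b‖ ^ 2 ≤ (1 + β) * ‖a‖ ^ 2 + (1 + 1 / β) * ‖b‖ ^ 2 := by
  have h := norm_add_sq_real a b
  have h2 : ⟪a, b⟫ ≤ ‖a‖ * ‖b‖ := real_inner_le_norm a b
  have h6 : 2 * (‖a‖ * ‖b‖) ≤ β * ‖a‖ ^ 2 + ‖b‖ ^ 2 / β := by
    rw [← sub_nonneg]
    have he : β * ‖a‖ ^ 2 + ‖b‖ ^ 2 / β - 2 * (‖a‖ * ‖b‖) = (β * ‖a‖ - ‖b‖) ^ 2 / β := by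
      field_simp
      ring
    rw [he]
    positivity
  have h7 : 1 / β * ‖b‖ ^ 2 = ‖b‖ ^ 2 / β := by ring
  nlinarith [h, h2, h6]

end aux

/-- Variance bound for the general variance-reduced gradient estimator. -/
theorem vr_estimator_variance_bound (d n : ℕ) (hn : 0 < n)
    (f : Fin n → EuclideanSpace ℝ (Fin d) → ℝ)
    (gradf : Fin n → EuclideanSpace ℝ (Fin d) → EuclideanSpace ℝ (Fin d))
    (hdiff : ∀ i x, HasGradientAt (f i) (gradf i x) x)
    (hconv : ∀ i, ConvexOn ℝ Set.univ (f i))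
    (L : ℝ) (hL : 0 < L)
    (hlip : ∀ i x y, ‖gradf i x - gradf i y‖ ≤ L * ‖x - y‖)
    (xstar : EuclideanSpace ℝ (Fin d))
    (hmin : ∀ x, (1 / (n : ℝ)) * ∑ i, f i xstar ≤ (1 / (n : ℝ)) * ∑ i, f i x)
    (β : ℝ) (hβ : 0 < β)
    (x : EuclideanSpace ℝ (Fin d)) (α : Fin n → EuclideanSpace ℝ (Fin d))
    (v : Fin n → EuclideanSpace ℝ (Fin d))
    (hv : ∀ i, v i = -(gradf i x - gradf i (α i) + (n : ℝ)⁻¹ • ∑ j, gradf j (α j))) :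
    (1 / (n : ℝ)) * ∑ i, ‖v i‖ ^ 2 ≤
      2 * L * (1 + 1 / β) *
        ((1 / (n : ℝ)) * ∑ i, (f i (α i) - f i xstar - ⟪gradf i xstar, α i - xstar⟫)) +
      2 * L * (1 + β) *
        ((1 / (n : ℝ)) * ∑ i, f i x - (1 / (n : ℝ)) * ∑ i, f i xstar) := by
  have hn0 : ((n : ℝ)) ≠ 0 := Nat.cast_ne_zero.2 hn.ne'
  have hn' : (0:ℝ) < (n:ℝ) := Nat.cast_pos.2 hn
  have hninv : (0:ℝ) < 1 / (n:ℝ) := by positivity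
  -- the gradient of the average vanishes at xstar
  have hSzero : ∑ i, gradf i xstar = 0 := by
    have hsum : HasFDerivAt (fun y => ∑ i, f i y)
        (∑ i, (InnerProductSpace.toDual ℝ (EuclideanSpace ℝ (Fin d)) (gradf i xstar))) xstar :=
      HasFDerivAt.fun_sum (fun i _ => (hdiff i xstar).hasFDerivAt)
    have hF : HasFDerivAt (fun y => (1/(n:ℝ)) * ∑ i, f i y)
        ((1/(n:ℝ)) • ∑ i, (InnerProductSpace.toDual ℝ (EuclideanSpace ℝ (Fin d))
          (gradf i xstar))) xstar := hsum.const_mul _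
    have hloc : IsLocalMin (fun y => (1/(n:ℝ)) * ∑ i, f i y) xstar :=
      Filter.Eventually.of_forall hmin
    have h0 := hloc.hasFDerivAt_eq_zero hF
    have h1 : ∑ i, (InnerProductSpace.toDual ℝ (EuclideanSpace ℝ (Fin d))
        (gradf i xstar)) = 0 := by
      rcases smul_eq_zero.1 h0 with h | h
      · exact absurd h (by positivity)
      · exact h
    apply (InnerProductSpace.toDual ℝ (EuclideanSpace ℝ (Fin d))).injective
    rw [map_sum, map_zero]
    exact h1
  have hco : ∀ i (y z : EuclideanSpace ℝ (Fin d)),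
      ‖gradf i y - gradf i z‖ ^ 2 ≤ 2 * L * (f i y - f i z - ⟪gradf i z, y - z⟫) :=
    fun i y z => cocoercivity (f i) (gradf i) L hL (hdiff i) (hconv i) (hlip i) y z
  set gbar : EuclideanSpace ℝ (Fin d) := (n : ℝ)⁻¹ • ∑ j, gradf j (α j) with hgbar
  set a : Fin n → EuclideanSpace ℝ (Fin d) := fun i => gradf i x - gradf i xstar with ha
  set X : Fin n → EuclideanSpace ℝ (Fin d) := fun i => gradf i (α i) - gradf i xstar with hX
  set b : Fin n → EuclideanSpace ℝ (Fin d) := fun i => gbar - X i with hb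
  -- pointwise Young split
  have hV : ∀ i, ‖v i‖ ^ 2 ≤ (1 + β) * ‖a i‖ ^ 2 + (1 + 1/β) * ‖b i‖ ^ 2 := by
    intro i
    have hab : a i + b i = gradf i x - gradf i (α i) + (n : ℝ)⁻¹ • ∑ j, gradf j (α j) := by
      show gradf i x - gradf i xstar + (gbar - (gradf i (α i) - gradf i xstar)) =
        gradf i x - gradf i (α i) + (n : ℝ)⁻¹ • ∑ j, gradf j (α j)
      rw [hgbar]
      abel
    rw [hv i, norm_neg, ← hab]
    exact young_split β hβ (a i) (b i)
  -- bound on A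
  have hA : ∑ i, ‖a i‖ ^ 2 ≤ 2 * L * (∑ i, f i x - ∑ i, f i xstar) := by
    have h2 : ∑ i, ‖a i‖ ^ 2 ≤
        ∑ i, 2 * L * (f i x - f i xstar - ⟪gradf i xstar, x - xstar⟫) :=
      Finset.sum_le_sum fun i _ => hco i x xstar
    have h3 : ∑ i, ⟪gradf i xstar, x - xstar⟫ = (0:ℝ) := by
      rw [← sum_inner, hSzero, inner_zero_left]
    calc ∑ i, ‖a i‖ ^ 2 ≤ ∑ i, 2 * L * (f i x - f i xstar - ⟪gradf i xstar, x - xstar⟫) := h2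
      _ = 2 * L * (∑ i, f i x - ∑ i, f i xstar - ∑ i, ⟪gradf i xstar, x - xstar⟫) := by
          rw [← Finset.mul_sum, Finset.sum_sub_distrib, Finset.sum_sub_distrib]
      _ = 2 * L * (∑ i, f i x - ∑ i, f i xstar) := by rw [h3]; ring
  -- variance bound on B
  have hT : ∑ i, X i = (n : ℝ) • gbar := by
    have : ∑ i, X i = ∑ j, gradf j (α j) := by
      rw [hX, Finset.sum_sub_distrib, hSzero, sub_zero]
    rw [this, hgbar, smul_inv_smul₀ hn0]
  have hvar : ∑ i, ‖b i‖ ^ 2 ≤ ∑ i, ‖X i‖ ^ 2 := by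
    have hexp : ∑ i, ‖b i‖ ^ 2 =
        (n : ℝ) * ‖gbar‖ ^ 2 - 2 * ⟪gbar, ∑ i, X i⟫ + ∑ i, ‖X i‖ ^ 2 := by
      calc ∑ i, ‖b i‖ ^ 2 = ∑ i, (‖gbar‖ ^ 2 - 2 * ⟪gbar, X i⟫ + ‖X i‖ ^ 2) :=
            Finset.sum_congr rfl fun i _ => norm_sub_sq_real _ _
        _ = (n : ℝ) * ‖gbar‖ ^ 2 - 2 * ⟪gbar, ∑ i, X i⟫ + ∑ i, ‖X i‖ ^ 2 := by
            rw [Finset.sum_add_distrib, Finset.sum_sub_distrib, Finset.sum_const,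
              Finset.card_univ, Fintype.card_fin, nsmul_eq_mul, ← Finset.mul_sum, inner_sum]
    have hip : ⟪gbar, ∑ i, X i⟫ = (n : ℝ) * ‖gbar‖ ^ 2 := by
      rw [hT, real_inner_smul_right, real_inner_self_eq_norm_sq]
    have hpos : 0 ≤ (n : ℝ) * ‖gbar‖ ^ 2 := by positivity
    rw [hexp, hip]
    linarith
  have hB : ∑ i, ‖b i‖ ^ 2 ≤
      2 * L * ∑ i, (f i (α i) - f i xstar - ⟪gradf i xstar, α i - xstar⟫) := by
    calc ∑ i, ‖b i‖ ^ 2 ≤ ∑ i, ‖X i‖ ^ 2 := hvar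
      _ ≤ ∑ i, 2 * L * (f i (α i) - f i xstar - ⟪gradf i xstar, α i - xstar⟫) :=
          Finset.sum_le_sum fun i _ => hco i (α i) xstar
      _ = 2 * L * ∑ i, (f i (α i) - f i xstar - ⟪gradf i xstar, α i - xstar⟫) := by
          rw [Finset.mul_sum]
  -- put everything together
  have hsplit : ∑ i, ‖v i‖ ^ 2 ≤ (1 + β) * ∑ i, ‖a i‖ ^ 2 + (1 + 1/β) * ∑ i, ‖b i‖ ^ 2 := by
    calc ∑ i, ‖v i‖ ^ 2 ≤ ∑ i, ((1 + β) * ‖a i‖ ^ 2 + (1 + 1/β) * ‖b i‖ ^ 2) :=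
          Finset.sum_le_sum fun i _ => hV i
      _ = (1 + β) * ∑ i, ‖a i‖ ^ 2 + (1 + 1/β) * ∑ i, ‖b i‖ ^ 2 := by
          rw [Finset.sum_add_distrib, Finset.mul_sum, Finset.mul_sum]
  have hβ1 : (0:ℝ) ≤ 1 + β := by linarith
  have hβ2 : (0:ℝ) ≤ 1 + 1/β := by
    have := one_div_pos.2 hβ
    linarith
  have hchain : ∑ i, ‖v i‖ ^ 2 ≤
      (1 + β) * (2 * L * (∑ i, f i x - ∑ i, f i xstar)) +
      (1 + 1/β) * (2 * L * ∑ i, (f i (α i) - f i xstar - ⟪gradf i xstar, α i - xstar⟫)) := by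
    refine hsplit.trans (add_le_add ?_ ?_)
    · exact mul_le_mul_of_nonneg_left hA hβ1
    · exact mul_le_mul_of_nonneg_left hB hβ2
  have := mul_le_mul_of_nonneg_left hchain hninv.le
  calc (1 / (n : ℝ)) * ∑ i, ‖v i‖ ^ 2 ≤
      (1 / (n : ℝ)) * ((1 + β) * (2 * L * (∑ i, f i x - ∑ i, f i xstar)) +
        (1 + 1/β) * (2 * L * ∑ i, (f i (α i) - f i xstar - ⟪gradf i xstar, α i - xstar⟫))) :=
        this
    _ = 2 * L * (1 + 1 / β) *
        ((1 / (n : ℝ)) * ∑ i, (f i (α i) - f i xstar - ⟪gradf i xstar, α i - xstar⟫)) +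
      2 * L * (1 + β) *
        ((1 / (n : ℝ)) * ∑ i, f i x - (1 / (n : ℝ)) * ∑ i, f i xstar) := by ring
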